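/- Size-reduction lemma: assuming ⟦A_max⟧ ≤ ⟦A_min⟧, there exists a computable natural number k (one may take k = (4|Q|)^{|Q|}) such that for every productive-set P_0 ∈ Reachable and every term s of height greater than k, there exists a term t with size(t) < size(s) such that t refines s for P_0 with some shift x ∈ ℝ. -/

import Mathlib

/-- A ranked alphabet: symbols with arities. -/
structure RankedAlphabet where
  symb : Type
  ar : symb → ℕ

/-- Terms (finite ranked trees) over a ranked alphabet. -/
inductive Term (A : RankedAlphabet) : Type where
  | node (a : A.symb) (ts : Fin (A.ar a) → Term A) : Term A

/-- Height of a term: length of the longest branch. -/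
def Term.height {A : RankedAlphabet} : Term A → ℕ
  | .node _ ts => Finset.univ.sup fun i => (ts i).height + 1

/-- Size of a term: number of nodes. -/
def Term.size {A : RankedAlphabet} : Term A → ℕ
  | .node _ ts => 1 + ∑ i, (ts i).size

/-- A nondeterministic tree automaton with real weights on transitions and final states. -/
structure WTA (A : RankedAlphabet) (Q : Type) where
  trans : (a : A.symb) → (Fin (A.ar a) → Q) → Q → Prop
  wt : (a : A.symb) → (Fin (A.ar a) → Q) → Q → ℝ
  final : Q → Prop
  fwt : Q → ℝ

/-- Runs of an automaton over a term, reaching a given state at the root. -/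
inductive RunOf {A : RankedAlphabet} {Q : Type} (M : WTA A Q) : Term A → Q → Type where
  | node (a : A.symb) (ts : Fin (A.ar a) → Term A) (qs : Fin (A.ar a) → Q) (q : Q)
      (hq : M.trans a qs q) (rs : ∀ i, RunOf M (ts i) (qs i)) : RunOf M (.node a ts) q

/-- The weight of a run: sum of the weights of the transitions used. -/
def RunOf.wt {A : RankedAlphabet} {Q : Type} {M : WTA A Q} :
    {t : Term A} → {q : Q} → RunOf M t q → ℝ
  | _, _, .node a _ qs q _ rs => (∑ i, (rs i).wt) + M.wt a qs q

/-- Contexts: terms with exactly one hole. -/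
inductive Ctx (A : RankedAlphabet) : Type where
  | hole : Ctx A
  | node (a : A.symb) (i : Fin (A.ar a)) (c : Ctx A) (ts : Fin (A.ar a) → Term A) : Ctx A

/-- Plugging a term into the hole of a context. -/
def Ctx.plug {A : RankedAlphabet} : Ctx A → Term A → Term A
  | .hole, t => t
  | .node a i c ts, t => .node a (Function.update ts i (c.plug t))

/-- Composition of contexts: plugging the second context into the hole of the first. -/
def Ctx.comp {A : RankedAlphabet} : Ctx A → Ctx A → Ctx A
  | .hole, d => d
  | .node a i c ts, d => .node a i (c.comp d) ts

/-- Iterated composition of a context with itself. -/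
def Ctx.pow {A : RankedAlphabet} (m : Ctx A) : ℕ → Ctx A
  | 0 => .hole
  | n + 1 => m.comp (m.pow n)

/-- Runs over a context, from a state (at the hole) to a state (at the root). -/
inductive CRun {A : RankedAlphabet} {Q : Type} (M : WTA A Q) : Ctx A → Q → Q → Type where
  | hole (p : Q) : CRun M .hole p p
  | node (a : A.symb) (i : Fin (A.ar a)) (c : Ctx A) (ts : Fin (A.ar a) → Term A)
      (qs : Fin (A.ar a) → Q) (p q : Q)
      (hq : M.trans a qs q)
      (hc : CRun M c p (qs i))
      (rs : ∀ j, j ≠ i → RunOf M (ts j) (qs j)) : CRun M (.node a i c ts) p q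

/-- The weight of a run over a context. -/
def CRun.wt {A : RankedAlphabet} {Q : Type} {M : WTA A Q} :
    {c : Ctx A} → {p q : Q} → CRun M c p q → ℝ
  | _, _, _, .hole _ => 0
  | _, _, _, .node a i _ _ qs _ q _ hc rs =>
      (∑ j : {j // j ≠ i}, (rs j.1 j.2).wt) + M.wt a qs q + hc.wt

/-- Gluing a run over a context with a run over a term yields a run over the plugged term. -/
def CRun.glue {A : RankedAlphabet} {Q : Type} {M : WTA A Q} {t : Term A} :
    {c : Ctx A} → {p q : Q} → CRun M c p q → RunOf M t p → RunOf M (c.plug t) q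
  | _, _, _, .hole _, r => r
  | _, _, _, .node a i c ts qs _ q hq hc rs, r =>
      .node a (Function.update ts i (c.plug t)) qs q hq
        (fun j =>
          if h : j = i then
            cast (by subst h; rw [Function.update_self]) (CRun.glue hc r)
          else
            cast (congrArg (fun s => RunOf M s (qs j))
              (Function.update_of_ne h (c.plug t) ts).symm) (rs j h))

/-- Gluing runs over composed contexts. -/
def CRun.cglue {A : RankedAlphabet} {Q : Type} {M : WTA A Q} {d : Ctx A} {p : Q} :
    {c : Ctx A} → {q r : Q} → CRun M c q r → CRun M d p q → CRun M (c.comp d) p r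
  | _, _, _, .hole _, rd => rd
  | _, _, _, .node a i c ts qs _ r hq hc rs, rd =>
      .node a i (c.comp d) ts qs p r hq (hc.cglue rd) rs

/-- The `n`-fold iteration of a loop run over a context. -/
def CRun.pow {A : RankedAlphabet} {Q : Type} {M : WTA A Q} {m : Ctx A} {q : Q}
    (σ : CRun M m q q) : (n : ℕ) → CRun M (m.pow n) q q
  | 0 => .hole q
  | n + 1 => σ.cglue (σ.pow n)

/-- `x` is the weight of some accepting run of `M` over `t`
(weight of the run plus the final-state weight). -/
def AccWeight {A : RankedAlphabet} {Q : Type} (M : WTA A Q) (t : Term A) (x : ℝ) : Prop :=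
  ∃ (q : Q) (r : RunOf M t q), M.final q ∧ r.wt + M.fwt q = x

/-- `M` has some accepting run over `t`. -/
def HasAcc {A : RankedAlphabet} {Q : Type} (M : WTA A Q) (t : Term A) : Prop :=
  ∃ x, AccWeight M t x

/-- `f` is the max-plus semantics of `M`: `f t = ⊥` iff there is no accepting run,
and otherwise `f t` is the maximum weight of an accepting run. -/
def ComputesMax {A : RankedAlphabet} {Q : Type} (M : WTA A Q) (f : Term A → Option ℝ) : Prop :=
  ∀ t, (f t = none ↔ ¬ HasAcc M t) ∧
    ∀ x, f t = some x → AccWeight M t x ∧ ∀ y, AccWeight M t y → y ≤ x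

/-- `f` is the min-plus semantics of `M`. -/
def ComputesMin {A : RankedAlphabet} {Q : Type} (M : WTA A Q) (f : Term A → Option ℝ) : Prop :=
  ∀ t, (f t = none ↔ ¬ HasAcc M t) ∧
    ∀ x, f t = some x → AccWeight M t x ∧ ∀ y, AccWeight M t y → x ≤ y

/-- An automaton is unambiguous if every term has at most one accepting run. -/
def Unambiguous {A : RankedAlphabet} {Q : Type} (M : WTA A Q) : Prop :=
  ∀ (t : Term A) (q q' : Q) (r : RunOf M t q) (r' : RunOf M t q'),
    M.final q → M.final q' → q = q' ∧ HEq r r'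

/-- The order on `ℝ ∪ {⊥}` in which `⊥` is comparable only with itself. -/
def OLe : Option ℝ → Option ℝ → Prop
  | none, none => True
  | some x, some y => x ≤ y
  | _, _ => False

/-- Shifting a value of `ℝ ∪ {⊥}` by a real number. -/
def oshift (u : Option ℝ) (x : ℝ) : Option ℝ := u.map (· + x)

/-- The set of states reachable at the root by some run over `t`. -/
def reachSet {A : RankedAlphabet} {Q : Type} (M : WTA A Q) (t : Term A) : Set Q :=
  {q | Nonempty (RunOf M t q)}

/-- The set of states at the hole from which there is an accepting run over the context `c`. -/
def prodSet {A : RankedAlphabet} {Q : Type} (M : WTA A Q) (c : Ctx A) : Set Q :=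
  {p | ∃ q, M.final q ∧ Nonempty (CRun M c p q)}

section Bi
variable {A : RankedAlphabet} {Q1 Q2 : Type} (M1 : WTA A Q1) (M2 : WTA A Q2)

/-- Reachable states of the disjoint union of the two automata. -/
def biReach (t : Term A) : Set (Q1 ⊕ Q2) :=
  Sum.inl '' reachSet M1 t ∪ Sum.inr '' reachSet M2 t

/-- Productive states of the disjoint union of the two automata. -/
def biProd (c : Ctx A) : Set (Q1 ⊕ Q2) :=
  Sum.inl '' prodSet M1 c ∪ Sum.inr '' prodSet M2 c

/-- Final states of the disjoint union of the two automata. -/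
def biFinal : Set (Q1 ⊕ Q2) :=
  Sum.inl '' {q | M1.final q} ∪ Sum.inr '' {q | M2.final q}

/-- Transition relation of the disjoint union of the two automata. -/
def biTrans (a : A.symb) (qs : Fin (A.ar a) → Q1 ⊕ Q2) (q : Q1 ⊕ Q2) : Prop :=
  (∃ (qs' : Fin (A.ar a) → Q1) (q' : Q1),
      qs = Sum.inl ∘ qs' ∧ q = Sum.inl q' ∧ M1.trans a qs' q') ∨
  (∃ (qs' : Fin (A.ar a) → Q2) (q' : Q2),
      qs = Sum.inr ∘ qs' ∧ q = Sum.inr q' ∧ M2.trans a qs' q')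

/-- The family `Reachable` of sets of states of the form `Reach(t)`. -/
def ReachableSets : Set (Set (Q1 ⊕ Q2)) := {S | ∃ t, biReach M1 M2 t = S}

/-- The family `Productive` of sets of states of the form `Prod(c)`. -/
def ProductiveSets : Set (Set (Q1 ⊕ Q2)) := {S | ∃ c, biProd M1 M2 c = S}

/-- `t` refines `s` for `P` with shift `x`. -/
def Refines (P : Set (Q1 ⊕ Q2)) (t s : Term A) (x : ℝ) : Prop :=
  biReach M1 M2 s = biReach M1 M2 t ∧
  (∀ p : Q1, Sum.inl p ∈ P → ∀ ρ : RunOf M1 s p, ∃ ρ' : RunOf M1 t p, ρ.wt ≤ ρ'.wt + x) ∧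
  (∀ q : Q2, Sum.inr q ∈ P → ∀ τ : RunOf M2 s q, ∃ τ' : RunOf M2 t q, τ'.wt + x ≤ τ.wt)

end Bi

/-- Transitions of the product automaton `A_pro`, relative to a transition relation `Δ`. -/
def ProTrans {A : RankedAlphabet} {Q : Type}
    (Δ : ∀ a : A.symb, (Fin (A.ar a) → Q) → Q → Prop) (a : A.symb)
    (RPs : Fin (A.ar a) → Set Q × Set Q) (RP : Set Q × Set Q) : Prop :=
  RP.1 = {r | ∃ rs, Δ a rs r ∧ ∀ j, rs j ∈ (RPs j).1} ∧
  ∀ i, (RPs i).2 =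
    {ri | ∃ rs p, Δ a rs p ∧ rs i = ri ∧ (∀ j, j ≠ i → rs j ∈ (RPs j).1) ∧ p ∈ RP.2}


section Aux

variable {A : RankedAlphabet} {Q : Type}

lemma fin_sum_split {n : ℕ} (i : Fin n) (g : Fin n → ℝ) :
    ∑ j, g j = g i + ∑ j : {j // j ≠ i}, g j.1 := by
  rw [← Finset.add_sum_erase Finset.univ g (Finset.mem_univ i)]
  congr 1
  rw [Finset.sum_subtype (Finset.univ.erase i) (p := fun j => j ≠ i)
    (fun x => by simp [Finset.mem_erase])]

lemma RunOf.wt_cast {M : WTA A Q} {t t' : Term A} {q q' : Q}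
    (ht : t = t') (hq : q = q') (e : RunOf M t q = RunOf M t' q') (r : RunOf M t q) :
    (cast e r).wt = r.wt := by
  subst ht; subst hq
  rw [cast_eq]

lemma CRun.wt_cast {M : WTA A Q} {c c' : Ctx A} {p p' q q' : Q}
    (hc : c = c') (hp : p = p') (hq : q = q')
    (e : CRun M c p q = CRun M c' p' q') (σ : CRun M c p q) :
    (cast e σ).wt = σ.wt := by
  subst hc; subst hp; subst hq
  rw [cast_eq]

lemma CRun.glue_wt {M : WTA A Q} {t : Term A} :
    ∀ {c : Ctx A} {p q : Q} (σ : CRun M c p q) (r : RunOf M t p),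
      (σ.glue r).wt = r.wt + σ.wt := by
  intro c p q σ
  induction σ with
  | hole p => intro r; exact (add_zero _).symm
  | node a i c ts qs p q hq hc rs ih =>
    intro r
    simp only [CRun.glue, RunOf.wt, CRun.wt]
    rw [fin_sum_split i]
    rw [dif_pos rfl]
    have h1 : ∀ (e : RunOf M (c.plug t) (qs i) =
        RunOf M (Function.update ts i (c.plug t) i) (qs i)),
        (cast e (CRun.glue hc r)).wt = (CRun.glue hc r).wt := fun e =>
      RunOf.wt_cast (Function.update_self i (c.plug t) ts).symm rfl e _
    rw [h1, ih]
    have h2 : ∀ j : {j // j ≠ i},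
        (if h : j.1 = i then
            cast (by rw [h, Function.update_self]) (CRun.glue hc r)
          else
            cast (congrArg (fun s => RunOf M s (qs j.1))
              (Function.update_of_ne h (c.plug t) ts).symm) (rs j.1 h)).wt
          = (rs j.1 j.2).wt := by
      intro j
      rw [dif_neg j.2]
      exact RunOf.wt_cast (Function.update_of_ne j.2 (c.plug t) ts).symm rfl _ _
    rw [Finset.sum_congr rfl (fun j _ => h2 j)]
    ring

lemma CRun.cglue_wt {M : WTA A Q} {d : Ctx A} {p : Q} :
    ∀ {c : Ctx A} {q r : Q} (σ : CRun M c q r) (τ : CRun M d p q),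
      (σ.cglue τ).wt = σ.wt + τ.wt := by
  intro c q r σ
  induction σ with
  | hole p => intro τ; exact (zero_add _).symm
  | node a i c ts qs p' q hq hc rs ih =>
    intro τ
    simp only [CRun.cglue, CRun.wt, ih]
    ring

lemma CRun.pow_wt {M : WTA A Q} {m : Ctx A} {q : Q} (σ : CRun M m q q) :
    ∀ n : ℕ, (σ.pow n).wt = n * σ.wt
  | 0 => by simp [CRun.pow, CRun.wt]
  | n + 1 => by
    show (σ.cglue (σ.pow n)).wt = _
    simp only [CRun.pow, CRun.cglue_wt, CRun.pow_wt σ n]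
    push_cast
    ring

end Aux
section Aux2

variable {A : RankedAlphabet} {Q : Type}

lemma Ctx.comp_plug (c : Ctx A) (d : Ctx A) (u : Term A) :
    (c.comp d).plug u = c.plug (d.plug u) := by
  induction c with
  | hole => rfl
  | node a i c ts ih => simp [Ctx.comp, Ctx.plug, ih]

lemma Term.size_pos (t : Term A) : 0 < t.size := by
  cases t with
  | node a ts => exact Nat.lt_of_lt_of_le Nat.zero_lt_one (Nat.le_add_right 1 _)

lemma sum_update_size {a : A.symb} (ts : Fin (A.ar a) → Term A) (i : Fin (A.ar a))
    (X : Term A) :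
    ∑ j, (Function.update ts i X j).size
      = X.size + ∑ j ∈ Finset.univ \ {i}, (ts j).size := by
  calc ∑ j, (Function.update ts i X j).size
      = ∑ j, Function.update (fun j => (ts j).size) i X.size j :=
        Finset.sum_congr rfl fun j _ => by
          rcases eq_or_ne j i with h | h
          · subst h; simp
          · simp [Function.update_of_ne h]
    _ = X.size + ∑ j ∈ Finset.univ \ {i}, (ts j).size :=
        Finset.sum_update_of_mem (Finset.mem_univ i) (fun j => (ts j).size) X.size

lemma Ctx.plug_size (c : Ctx A) (u u' : Term A) :
    (c.plug u).size + u'.size = (c.plug u').size + u.size := by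
  induction c with
  | hole => simp [Ctx.plug]; ring
  | node a i c ts ih =>
    simp only [Ctx.plug, Term.size]
    rw [sum_update_size, sum_update_size]
    omega

/-- Decomposition of a run over a plugged context. -/
lemma runDecomp (M : WTA A Q) (c : Ctx A) (u : Term A) (q : Q)
    (r : RunOf M (c.plug u) q) :
    ∃ (p : Q) (σ : CRun M c p q) (ρ : RunOf M u p), r.wt = σ.wt + ρ.wt := by
  induction c generalizing q with
  | hole =>
    exact ⟨q, CRun.hole q, r, (zero_add _).symm⟩
  | node a i c ts ih =>
    cases r with
    | node _ _ qs q hq rs =>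
      have hi : Function.update ts i (c.plug u) i = c.plug u := Function.update_self _ _ _
      obtain ⟨p, σ', ρ, hw⟩ := ih (qs i) (cast (by rw [hi]) (rs i))
      refine ⟨p, CRun.node a i c ts qs p q hq σ'
        (fun j hj => cast (by rw [Function.update_of_ne hj]) (rs j)), ρ, ?_⟩
      have hwi : (rs i).wt = σ'.wt + ρ.wt := by
        rw [← RunOf.wt_cast hi rfl (by rw [hi]) (rs i)]
        exact hw
      simp only [RunOf.wt, CRun.wt]
      rw [fin_sum_split i, hwi]
      have h2 : ∀ j : {j // j ≠ i},
          (cast (by rw [Function.update_of_ne j.2]) (rs j.1) :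
            RunOf M (ts j.1) (qs j.1)).wt = (rs j.1).wt := fun j =>
        RunOf.wt_cast (Function.update_of_ne j.2 (c.plug u) ts) rfl _ _
      rw [Finset.sum_congr rfl (fun j _ => h2 j)]
      ring

end Aux2
section Aux3

variable {A : RankedAlphabet} {Q : Type}

/-- The composite context between positions `a` and `b` of a chain. -/
def Cmid (c : ℕ → Ctx A) (a : ℕ) : ℕ → Ctx A
  | 0 => .hole
  | b + 1 => if a ≤ b then (Cmid c a b).comp (c b) else .hole

lemma Cmid_of_le (c : ℕ → Ctx A) {a b : ℕ} (h : b ≤ a) : Cmid c a b = .hole := by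
  cases b with
  | zero => rfl
  | succ b => exact if_neg (by omega)

lemma Cmid_succ (c : ℕ → Ctx A) {a b : ℕ} (h : a ≤ b) :
    Cmid c a (b + 1) = (Cmid c a b).comp (c b) := if_pos h

lemma plug_Cmid (v : ℕ → Term A) (c : ℕ → Ctx A) (n : ℕ)
    (hv : ∀ t, t < n → v t = (c t).plug (v (t + 1))) :
    ∀ b, b ≤ n → ∀ a, a ≤ b → v a = (Cmid c a b).plug (v b) := by
  intro b
  induction b with
  | zero =>
    intro _ a ha
    obtain rfl : a = 0 := Nat.le_zero.mp ha
    rfl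
  | succ b ih =>
    intro hb a ha
    rcases Nat.lt_or_ge a (b + 1) with h | h
    · have hab : a ≤ b := by omega
      rw [Cmid_succ c hab, Ctx.comp_plug, ← hv b (by omega)]
      exact ih (by omega) a hab
    · have : a = b + 1 := by omega
      subst this
      rw [Cmid_of_le c (le_refl _)]
      rfl

theorem decompChain (M : WTA A Q) (v : ℕ → Term A) (c : ℕ → Ctx A) :
    ∀ n : ℕ, (∀ t, t < n → v t = (c t).plug (v (t + 1))) →
    ∀ {r : Q} (θ : RunOf M (v 0) r),
    ∃ (p : ℕ → Q) (ρ : ∀ t, t ≤ n → RunOf M (v t) (p t)),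
      p 0 = r ∧ (∀ h0, (ρ 0 h0).wt = θ.wt) ∧
      ∀ a b (hab : a ≤ b) (hb : b ≤ n),
        ∃ σ : CRun M (Cmid c a b) (p b) (p a),
          (ρ a (hab.trans hb)).wt = σ.wt + (ρ b hb).wt := by
  intro n
  induction n with
  | zero =>
    intro _ r θ
    refine ⟨fun _ => r, fun t ht => cast (by rw [Nat.le_zero.mp ht]) θ, rfl, ?_, ?_⟩
    · intro h0
      exact RunOf.wt_cast rfl rfl _ θ
    · intro a b hab hb
      obtain rfl : b = 0 := Nat.le_zero.mp hb
      obtain rfl : a = 0 := Nat.le_zero.mp hab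
      exact ⟨CRun.hole r, by simp [CRun.wt]⟩
  | succ n ih =>
    intro hv r θ
    obtain ⟨p, ρ, hp0, hw0, hσ⟩ := ih (fun t ht => hv t (by omega)) θ
    have hvn : v n = (c n).plug (v (n + 1)) := hv n (by omega)
    obtain ⟨p', σ', ρ', hw'⟩ :=
      runDecomp M (c n) (v (n + 1)) (p n) (cast (by rw [hvn]) (ρ n (le_refl n)))
    have hwn : (ρ n (le_refl n)).wt = σ'.wt + ρ'.wt := by
      rw [← RunOf.wt_cast hvn rfl (by rw [hvn]) (ρ n (le_refl n))]
      exact hw'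
    refine ⟨fun t => if t ≤ n then p t else p',
      fun t ht =>
        if h : t ≤ n then cast (by beta_reduce; rw [if_pos h]) (ρ t h)
        else cast (by
          have ht' : t = n + 1 := by omega
          subst ht'
          beta_reduce
          rw [if_neg h]) ρ', ?_, ?_, ?_⟩
    · beta_reduce; rw [if_pos (Nat.zero_le n)]; exact hp0
    · intro h0
      beta_reduce
      rw [dif_pos (Nat.zero_le n)]
      exact (RunOf.wt_cast rfl (if_pos (Nat.zero_le n)).symm _ _).trans (hw0 _)
    · intro a b hab hb
      by_cases hbn : b ≤ n
      · have han : a ≤ n := hab.trans hbn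
        obtain ⟨σ, hσw⟩ := hσ a b hab hbn
        refine ⟨cast (by beta_reduce; rw [if_pos han, if_pos hbn]) σ, ?_⟩
        beta_reduce
        rw [dif_pos han, dif_pos hbn]
        rw [RunOf.wt_cast rfl (if_pos han).symm _ _,
          RunOf.wt_cast rfl (if_pos hbn).symm _ _,
          CRun.wt_cast rfl (if_pos hbn).symm (if_pos han).symm _ _]
        exact hσw
      · have hb1 : b = n + 1 := by omega
        subst hb1
        have hnn : ¬ (n + 1 ≤ n) := by omega
        by_cases han : a ≤ n
        · obtain ⟨σ, hσw⟩ := hσ a n han (le_refl n)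
          refine ⟨cast (by beta_reduce; rw [Cmid_succ c han, if_pos han, if_neg hnn]) (σ.cglue σ'), ?_⟩
          beta_reduce
          rw [dif_pos han, dif_neg hnn]
          rw [RunOf.wt_cast rfl (if_pos han).symm _ _,
            RunOf.wt_cast rfl (if_neg hnn).symm _ _,
            CRun.wt_cast (Cmid_succ c han).symm (if_neg hnn).symm (if_pos han).symm _ _,
            CRun.cglue_wt]
          have hσw' : (ρ a han).wt = σ.wt + (ρ n (le_refl n)).wt := hσw
          rw [hσw', hwn]
          ring
        · have ha1 : a = n + 1 := by omega
          subst ha1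
          refine ⟨cast (by beta_reduce; rw [Cmid_of_le c (le_refl _), if_neg hnn]) (CRun.hole p'), ?_⟩
          beta_reduce
          rw [dif_neg hnn]
          rw [RunOf.wt_cast rfl (if_neg hnn).symm _ _,
            CRun.wt_cast (Cmid_of_le c (le_refl _)).symm (if_neg hnn).symm (if_neg hnn).symm _ _]
          simp [CRun.wt]

end Aux3
section Aux4

variable {A : RankedAlphabet} {Q : Type}

lemma reach_node (M : WTA A Q) (a : A.symb) (ts : Fin (A.ar a) → Term A) (q : Q) :
    q ∈ reachSet M (.node a ts) ↔
      ∃ qs : Fin (A.ar a) → Q, M.trans a qs q ∧ ∀ i, qs i ∈ reachSet M (ts i) := by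
  constructor
  · rintro ⟨r⟩
    cases r with
    | node _ _ qs q hq rs => exact ⟨qs, hq, fun i => ⟨rs i⟩⟩
  · rintro ⟨qs, hq, hr⟩
    have : ∀ i, Nonempty (RunOf M (ts i) (qs i)) := hr
    obtain ⟨rs⟩ := Classical.nonempty_pi.mpr this
    exact ⟨RunOf.node a ts qs q hq rs⟩

lemma reach_plug (M : WTA A Q) (c : Ctx A) (u u' : Term A)
    (h : reachSet M u = reachSet M u') :
    reachSet M (c.plug u) = reachSet M (c.plug u') := by
  induction c with
  | hole => exact h
  | node a i c ts ih =>
    show reachSet M (.node a _) = reachSet M (.node a _)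
    ext q
    rw [reach_node, reach_node]
    constructor <;> rintro ⟨qs, hq, hr⟩ <;> refine ⟨qs, hq, fun j => ?_⟩ <;>
      have hrj := hr j
    · rcases eq_or_ne j i with rfl | hj
      · rw [Function.update_self] at hrj ⊢
        rw [← ih]; exact hrj
      · rw [Function.update_of_ne hj] at hrj ⊢
        exact hrj
    · rcases eq_or_ne j i with rfl | hj
      · rw [Function.update_self] at hrj ⊢
        rw [ih]; exact hrj
      · rw [Function.update_of_ne hj] at hrj ⊢
        exact hrj

/-- The set of weights of runs over a term is finite. -/
lemma wtSet_finite [Fintype Q] (M : WTA A Q) (t : Term A) (q : Q) :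
    (Set.range (fun r : RunOf M t q => r.wt)).Finite := by
  induction t generalizing q with
  | node a ts ih =>
    have : Set.range (fun r : RunOf M (.node a ts) q => r.wt) ⊆
        ⋃ qs : Fin (A.ar a) → Q,
          (fun ws : Fin (A.ar a) → ℝ => (∑ i, ws i) + M.wt a qs q) ''
            (Set.univ.pi fun i => Set.range (fun r : RunOf M (ts i) (qs i) => r.wt)) := by
      rintro x ⟨r, rfl⟩
      cases r with
      | node _ _ qs q hq rs =>
        refine Set.mem_iUnion.mpr ⟨qs, ⟨fun i => (rs i).wt, fun i _ => ⟨rs i, rfl⟩, rfl⟩⟩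
    refine Set.Finite.subset ?_ this
    refine Set.finite_iUnion fun qs => Set.Finite.image _ (Set.Finite.pi fun i => ih i (qs i))

lemma exists_max_run [Fintype Q] (M : WTA A Q) (t : Term A) (q : Q)
    (h : Nonempty (RunOf M t q)) :
    ∃ ρ : RunOf M t q, ∀ ρ' : RunOf M t q, ρ'.wt ≤ ρ.wt := by
  obtain ⟨w, ⟨ρ, rfl⟩, hmax⟩ := Set.exists_max_image _ (fun x : ℝ => x)
    (wtSet_finite M t q) (Set.range_nonempty _)
  exact ⟨ρ, fun ρ' => hmax _ ⟨ρ', rfl⟩⟩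

lemma exists_min_run [Fintype Q] (M : WTA A Q) (t : Term A) (q : Q)
    (h : Nonempty (RunOf M t q)) :
    ∃ ρ : RunOf M t q, ∀ ρ' : RunOf M t q, ρ.wt ≤ ρ'.wt := by
  obtain ⟨w, ⟨ρ, rfl⟩, hmin⟩ := Set.exists_min_image _ (fun x : ℝ => x)
    (wtSet_finite M t q) (Set.range_nonempty _)
  exact ⟨ρ, fun ρ' => hmin _ ⟨ρ', rfl⟩⟩

/-- A term of height at least `n` has a chain of nested one-level contexts. -/
lemma exists_chain : ∀ (n : ℕ) (s : Term A), n ≤ s.height →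
    ∃ (v : ℕ → Term A) (c : ℕ → Ctx A), v 0 = s ∧
      ∀ t, t < n → v t = (c t).plug (v (t + 1)) ∧ (v (t + 1)).size < (v t).size := by
  intro n
  induction n with
  | zero =>
    intro s _
    exact ⟨fun _ => s, fun _ => Ctx.hole, rfl, fun t ht => absurd ht (Nat.not_lt_zero t)⟩
  | succ n ih =>
    intro s hs
    obtain ⟨a, ts⟩ := s
    have : ∃ i, n + 1 ≤ (ts i).height + 1 := by
      by_contra hc
      push_neg at hc
      have : Term.height (.node a ts) ≤ n := by
        rw [Term.height]
        exact Finset.sup_le fun i _ => by have := hc i; omega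
      omega
    obtain ⟨i, hi⟩ := this
    obtain ⟨v, c, hv0, hvc⟩ := ih (ts i) (by omega)
    refine ⟨fun t => if t = 0 then .node a ts else v (t - 1),
      fun t => if t = 0 then .node a i .hole ts else c (t - 1), by simp, ?_⟩
    intro t ht
    rcases Nat.eq_zero_or_pos t with rfl | hpos
    · constructor
      · simp only [if_pos rfl, if_neg (Nat.one_ne_zero)]
        show Term.node a ts = Term.node a (Function.update ts i (Ctx.hole.plug (v 0)))
        rw [hv0]
        show Term.node a ts = Term.node a (Function.update ts i (ts i))
        rw [Function.update_eq_self]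
      · simp only [if_pos rfl, if_neg (Nat.one_ne_zero)]
        rw [hv0]
        show (ts i).size < Term.size (.node a ts)
        rw [Term.size]
        calc (ts i).size ≤ ∑ j, (ts j).size :=
              Finset.single_le_sum (f := fun j => (ts j).size)
                (fun j _ => Nat.zero_le _) (Finset.mem_univ i)
          _ < 1 + ∑ j, (ts j).size := by omega
    · have h1 : t ≠ 0 := by omega
      have h2 : t + 1 ≠ 0 := by omega
      simp only [if_neg h1, if_neg h2]
      have : t - 1 < n := by omega
      have := hvc (t - 1) this
      have ht1 : t - 1 + 1 = t := by omega
      rw [ht1] at this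
      have ht2 : t + 1 - 1 = t := by omega
      rw [ht2]
      exact this

end Aux4
section Aux5

variable {A : RankedAlphabet} {Q1 Q2 : Type}

lemma inl_mem_biProd (M1 : WTA A Q1) (M2 : WTA A Q2) (d : Ctx A) (p : Q1) :
    Sum.inl p ∈ biProd M1 M2 d ↔ p ∈ prodSet M1 d := by
  simp [biProd]

lemma inr_mem_biProd (M1 : WTA A Q1) (M2 : WTA A Q2) (d : Ctx A) (q : Q2) :
    Sum.inr q ∈ biProd M1 M2 d ↔ q ∈ prodSet M2 d := by
  simp [biProd]

lemma biReach_components (M1 : WTA A Q1) (M2 : WTA A Q2) {u w : Term A}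
    (h : biReach M1 M2 u = biReach M1 M2 w) :
    reachSet M1 u = reachSet M1 w ∧ reachSet M2 u = reachSet M2 w := by
  constructor <;> ext x
  · have := Set.ext_iff.mp h (Sum.inl x); simpa [biReach] using this
  · have := Set.ext_iff.mp h (Sum.inr x); simpa [biReach] using this

lemma biReach_congr (M1 : WTA A Q1) (M2 : WTA A Q2) {u w : Term A}
    (h1 : reachSet M1 u = reachSet M1 w) (h2 : reachSet M2 u = reachSet M2 w) :
    biReach M1 M2 u = biReach M1 M2 w := by
  rw [biReach, biReach, h1, h2]

lemma rate_le {lam mu C1 C2 : ℝ} (h : ∀ n : ℕ, C1 + n * lam ≤ C2 + n * mu) :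
    lam ≤ mu := by
  by_contra hlt
  push_neg at hlt
  obtain ⟨n, hn⟩ := exists_nat_gt ((C2 - C1) / (lam - mu))
  rw [div_lt_iff₀ (by linarith)] at hn
  have h2 : (n : ℝ) * (lam - mu) = n * lam - n * mu := by ring
  have := h n
  linarith

lemma fg_compare (Mmax : WTA A Q1) (Mmin : WTA A Q2)
    (f g : Term A → Option ℝ)
    (hf : ComputesMax Mmax f) (hg : ComputesMin Mmin g)
    (hle : ∀ t, OLe (f t) (g t)) (d : Ctx A) {p : Q1} {qf : Q1} {q : Q2} {qf' : Q2}
    (hfin : Mmax.final qf) (δ : CRun Mmax d p qf)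
    (hfin' : Mmin.final qf') (δ' : CRun Mmin d q qf')
    (w : Term A) (ρp : RunOf Mmax w p) (ρq : RunOf Mmin w q) :
    ρp.wt + (δ.wt + Mmax.fwt qf) ≤ ρq.wt + (δ'.wt + Mmin.fwt qf') := by
  have hacc1 : AccWeight Mmax (d.plug w) (ρp.wt + (δ.wt + Mmax.fwt qf)) :=
    ⟨qf, δ.glue ρp, hfin, by rw [CRun.glue_wt]; ring⟩
  have hacc2 : AccWeight Mmin (d.plug w) (ρq.wt + (δ'.wt + Mmin.fwt qf')) :=
    ⟨qf', δ'.glue ρq, hfin', by rw [CRun.glue_wt]; ring⟩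
  have h1 : f (d.plug w) ≠ none := by
    rw [Ne, (hf _).1]
    intro hno
    exact hno ⟨_, hacc1⟩
  have h2 : g (d.plug w) ≠ none := by
    rw [Ne, (hg _).1]
    intro hno
    exact hno ⟨_, hacc2⟩
  obtain ⟨F, hF⟩ := Option.ne_none_iff_exists'.mp h1
  obtain ⟨G, hG⟩ := Option.ne_none_iff_exists'.mp h2
  have hFw := (hf _).2 F hF
  have hGw := (hg _).2 G hG
  have hFG : F ≤ G := by
    have := hle (d.plug w)
    rw [hF, hG] at this
    exact this
  calc ρp.wt + (δ.wt + Mmax.fwt qf) ≤ F := hFw.2 _ hacc1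
    _ ≤ G := hFG
    _ ≤ _ := hGw.2 _ hacc2

lemma size_chain_mono {A : RankedAlphabet} (v : ℕ → Term A) (n : ℕ)
    (hsz : ∀ t, t < n → (v (t + 1)).size < (v t).size) :
    ∀ b, b ≤ n → ∀ a, a < b → (v b).size < (v a).size := by
  intro b
  induction b with
  | zero => omega
  | succ b ih =>
    intro hb a ha
    have h1 : (v (b + 1)).size < (v b).size := hsz b (by omega)
    rcases Nat.lt_or_ge a b with h | h
    · exact h1.trans (ih (by omega) a h)
    · have : a = b := by omega
      subst this
      exact h1

end Aux5

/-- size-reduction lemma: assuming `⟦A_max⟧ ≤ ⟦A_min⟧`, there is a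
`k ∈ ℕ` such that for every productive-set `P₀` and every term `s` of height greater
than `k`, some strictly smaller term `t` refines `s` for `P₀` with some shift `x`. -/
theorem size_reduction {A : RankedAlphabet} {Q1 Q2 : Type}
    [Fintype Q1] [Fintype Q2] (Mmax : WTA A Q1) (Mmin : WTA A Q2)
    (f g : Term A → Option ℝ)
    (hf : ComputesMax Mmax f) (hg : ComputesMin Mmin g)
    (hle : ∀ t, OLe (f t) (g t)) :
    ∃ k : ℕ, ∀ P0 ∈ ProductiveSets Mmax Mmin, ∀ s : Term A, k < s.height →
      ∃ (t : Term A) (x : ℝ), t.size < s.size ∧ Refines Mmax Mmin P0 t s x := by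
  classical
  refine ⟨Nat.card (Set (Q1 ⊕ Q2) × (Q1 → Q1) × (Q2 → Q2)), ?_⟩
  rintro P0 ⟨d, rfl⟩ s hh
  set k := Nat.card (Set (Q1 ⊕ Q2) × (Q1 → Q1) × (Q2 → Q2)) with hk
  set n := k + 1 with hn
  obtain ⟨v, c, hv0, hchain⟩ := exists_chain n s (by omega)
  subst hv0
  have hvc : ∀ t, t < n → v t = (c t).plug (v (t + 1)) := fun t ht => (hchain t ht).1
  have hsz : ∀ t, t < n → (v (t + 1)).size < (v t).size := fun t ht => (hchain t ht).2
  -- decompositions of optimal runs for the max automaton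
  have H1 : ∀ p1 : Q1, ∃ P : ℕ → Q1,
      p1 ∈ reachSet Mmax (v 0) →
      P 0 = p1 ∧
      ∃ ρ : ∀ t, t ≤ n → RunOf Mmax (v t) (P t),
        (∀ ρ'' : RunOf Mmax (v 0) p1, ρ''.wt ≤ (ρ 0 (Nat.zero_le n)).wt) ∧
        ∀ a b : ℕ, ∀ hab : a ≤ b, ∀ hb : b ≤ n,
          ∃ σ : CRun Mmax (Cmid c a b) (P b) (P a),
            (ρ a (hab.trans hb)).wt = σ.wt + (ρ b hb).wt := by
    intro p1
    by_cases hr : p1 ∈ reachSet Mmax (v 0)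
    · obtain ⟨θ, hopt⟩ := exists_max_run Mmax (v 0) p1 hr
      obtain ⟨P, ρ, hP0, hw0, hσ⟩ := decompChain Mmax v c n hvc θ
      exact ⟨P, fun _ => ⟨hP0, ρ, fun ρ'' => le_of_le_of_eq (hopt ρ'') (hw0 _).symm, hσ⟩⟩
    · exact ⟨fun _ => p1, fun h => absurd h hr⟩
  choose P1 hP1 using H1
  -- decompositions of optimal runs for the min automaton
  have H2 : ∀ q1 : Q2, ∃ P : ℕ → Q2,
      q1 ∈ reachSet Mmin (v 0) →
      P 0 = q1 ∧
      ∃ ρ : ∀ t, t ≤ n → RunOf Mmin (v t) (P t),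
        (∀ τ'' : RunOf Mmin (v 0) q1, (ρ 0 (Nat.zero_le n)).wt ≤ τ''.wt) ∧
        ∀ a b : ℕ, ∀ hab : a ≤ b, ∀ hb : b ≤ n,
          ∃ σ : CRun Mmin (Cmid c a b) (P b) (P a),
            (ρ a (hab.trans hb)).wt = σ.wt + (ρ b hb).wt := by
    intro q1
    by_cases hr : q1 ∈ reachSet Mmin (v 0)
    · obtain ⟨θ, hopt⟩ := exists_min_run Mmin (v 0) q1 hr
      obtain ⟨P, ρ, hP0, hw0, hσ⟩ := decompChain Mmin v c n hvc θ
      exact ⟨P, fun _ => ⟨hP0, ρ, fun τ'' => le_of_eq_of_le (hw0 _) (hopt τ''), hσ⟩⟩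
    · exact ⟨fun _ => q1, fun h => absurd h hr⟩
  choose P2 hP2 using H2
  -- pigeonhole over the positions of the chain
  letI : Fintype (Set (Q1 ⊕ Q2) × (Q1 → Q1) × (Q2 → Q2)) := Fintype.ofFinite _
  obtain ⟨i0, j0, hne, hdata⟩ := Fintype.exists_ne_map_eq_of_card_lt
    (fun t : Fin (n + 1) =>
      (biReach Mmax Mmin (v t.val), fun p1 => P1 p1 t.val, fun q2 => P2 q2 t.val))
    (by
      rw [Fintype.card_fin]
      have hcc : Nat.card (Set (Q1 ⊕ Q2) × (Q1 → Q1) × (Q2 → Q2)) =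
          Fintype.card (Set (Q1 ⊕ Q2) × (Q1 → Q1) × (Q2 → Q2)) :=
        Nat.card_eq_fintype_card
      omega)
  obtain ⟨a, b, hab, hbn, hReachab, hPa, hQa⟩ : ∃ a b : ℕ, a < b ∧ b ≤ n ∧
      biReach Mmax Mmin (v a) = biReach Mmax Mmin (v b) ∧
      (∀ p1, P1 p1 a = P1 p1 b) ∧ (∀ q2, P2 q2 a = P2 q2 b) := by
    have hvne : i0.val ≠ j0.val := fun hh' => hne (Fin.ext hh')
    rcases Nat.lt_or_ge i0.val j0.val with h | h
    · exact ⟨i0.val, j0.val, h, by omega,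
        congrArg Prod.fst hdata,
        fun p1 => congrFun (congrArg (fun z => z.2.1) hdata) p1,
        fun q2 => congrFun (congrArg (fun z => z.2.2) hdata) q2⟩
    · exact ⟨j0.val, i0.val, by omega, by omega,
        congrArg Prod.fst hdata.symm,
        fun p1 => congrFun (congrArg (fun z => z.2.1) hdata.symm) p1,
        fun q2 => congrFun (congrArg (fun z => z.2.2) hdata.symm) q2⟩
  have han : a ≤ n := by omega
  have hplug0a : v 0 = (Cmid c 0 a).plug (v a) := plug_Cmid v c n hvc a han 0 (Nat.zero_le a)
  set tcut := (Cmid c 0 a).plug (v b) with htcut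
  -- size decreases
  have hsizecut : tcut.size < (v 0).size := by
    have h1 := Ctx.plug_size (Cmid c 0 a) (v b) (v a)
    have h2 : (v b).size < (v a).size := size_chain_mono v n hsz b hbn a hab
    rw [← hplug0a] at h1
    rw [htcut]
    omega
  -- reach sets agree
  obtain ⟨hr1, hr2⟩ := biReach_components Mmax Mmin hReachab
  have hreach1 : reachSet Mmax (v 0) = reachSet Mmax tcut := by
    rw [hplug0a]
    exact reach_plug Mmax (Cmid c 0 a) _ _ hr1
  have hreach2 : reachSet Mmin (v 0) = reachSet Mmin tcut := by
    rw [hplug0a]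
    exact reach_plug Mmin (Cmid c 0 a) _ _ hr2
  have hbir : biReach Mmax Mmin (v 0) = biReach Mmax Mmin tcut :=
    biReach_congr Mmax Mmin hreach1 hreach2
  -- max side: loop weight and base weight
  have MAX : ∀ p : Q1, ∃ lam C1 : ℝ,
      p ∈ reachSet Mmax (v 0) →
      ((∀ ρ'' : RunOf Mmax (v 0) p, ρ''.wt ≤ C1 + lam) ∧
       (∃ ρ' : RunOf Mmax tcut p, ρ'.wt = C1) ∧
       (∀ m : ℕ, ∃ ρn : RunOf Mmax ((Cmid c 0 a).plug (((Cmid c a b).pow m).plug (v b))) p,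
          ρn.wt = C1 + m * lam)) := by
    intro p
    by_cases hr : p ∈ reachSet Mmax (v 0)
    · obtain ⟨hP0, ρ, hopt, hσ⟩ := hP1 p hr
      obtain ⟨σ0a, hw0a⟩ := hσ 0 a (Nat.zero_le a) han
      obtain ⟨σab, hwab⟩ := hσ a b (le_of_lt hab) hbn
      have hPab : P1 p a = P1 p b := hPa p
      refine ⟨σab.wt, (ρ b hbn).wt + σ0a.wt, fun _ => ⟨?_, ?_, ?_⟩⟩
      · intro ρ''
        have h1 := hopt ρ''
        have hw0a' : (ρ 0 (Nat.zero_le n)).wt = σ0a.wt + (ρ a han).wt := hw0a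
        have hwab' : (ρ a han).wt = σab.wt + (ρ b hbn).wt := hwab
        linarith
      · refine ⟨cast (by rw [hP0]) (σ0a.glue (cast (by rw [hPab]) (ρ b hbn))), ?_⟩
        rw [RunOf.wt_cast rfl hP0 _ _, CRun.glue_wt, RunOf.wt_cast rfl hPab.symm _ _]
      · intro m
        refine ⟨cast (by rw [hP0]) (σ0a.glue (cast (by rw [hPab])
          (((cast (by rw [hPab]) σab :
              CRun Mmax (Cmid c a b) (P1 p b) (P1 p b)).pow m).glue (ρ b hbn)))), ?_⟩
        rw [RunOf.wt_cast rfl hP0 _ _, CRun.glue_wt, RunOf.wt_cast rfl hPab.symm _ _,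
          CRun.glue_wt, CRun.pow_wt, CRun.wt_cast rfl rfl hPab _ _]
        ring
    · exact ⟨0, 0, fun h => absurd h hr⟩
  -- min side
  have MIN : ∀ q : Q2, ∃ mu C2 : ℝ,
      q ∈ reachSet Mmin (v 0) →
      ((∀ τ'' : RunOf Mmin (v 0) q, C2 + mu ≤ τ''.wt) ∧
       (∃ τ' : RunOf Mmin tcut q, τ'.wt = C2) ∧
       (∀ m : ℕ, ∃ τn : RunOf Mmin ((Cmid c 0 a).plug (((Cmid c a b).pow m).plug (v b))) q,
          τn.wt = C2 + m * mu)) := by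
    intro q
    by_cases hr : q ∈ reachSet Mmin (v 0)
    · obtain ⟨hP0, ρ, hopt, hσ⟩ := hP2 q hr
      obtain ⟨σ0a, hw0a⟩ := hσ 0 a (Nat.zero_le a) han
      obtain ⟨σab, hwab⟩ := hσ a b (le_of_lt hab) hbn
      have hPab : P2 q a = P2 q b := hQa q
      refine ⟨σab.wt, (ρ b hbn).wt + σ0a.wt, fun _ => ⟨?_, ?_, ?_⟩⟩
      · intro τ''
        have h1 := hopt τ''
        have hw0a' : (ρ 0 (Nat.zero_le n)).wt = σ0a.wt + (ρ a han).wt := hw0a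
        have hwab' : (ρ a han).wt = σab.wt + (ρ b hbn).wt := hwab
        linarith
      · refine ⟨cast (by rw [hP0]) (σ0a.glue (cast (by rw [hPab]) (ρ b hbn))), ?_⟩
        rw [RunOf.wt_cast rfl hP0 _ _, CRun.glue_wt, RunOf.wt_cast rfl hPab.symm _ _]
      · intro m
        refine ⟨cast (by rw [hP0]) (σ0a.glue (cast (by rw [hPab])
          (((cast (by rw [hPab]) σab :
              CRun Mmin (Cmid c a b) (P2 q b) (P2 q b)).pow m).glue (ρ b hbn)))), ?_⟩
        rw [RunOf.wt_cast rfl hP0 _ _, CRun.glue_wt, RunOf.wt_cast rfl hPab.symm _ _,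
          CRun.glue_wt, CRun.pow_wt, CRun.wt_cast rfl rfl hPab _ _]
        ring
    · exact ⟨0, 0, fun h => absurd h hr⟩
  choose lam C1 hMAX using MAX
  choose mu C2 hMIN using MIN
  -- every productive reachable max loop is at most every productive reachable min loop
  have KEY : ∀ p : Q1, Sum.inl p ∈ biProd Mmax Mmin d → p ∈ reachSet Mmax (v 0) →
      ∀ q : Q2, Sum.inr q ∈ biProd Mmax Mmin d → q ∈ reachSet Mmin (v 0) →
      lam p ≤ mu q := by
    intro p hp hrp q hq hrq
    obtain ⟨qf, hfin, ⟨δ⟩⟩ := (inl_mem_biProd Mmax Mmin d p).mp hp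
    obtain ⟨qf', hfin', ⟨δ'⟩⟩ := (inr_mem_biProd Mmax Mmin d q).mp hq
    apply rate_le (C1 := C1 p + (δ.wt + Mmax.fwt qf)) (C2 := C2 q + (δ'.wt + Mmin.fwt qf'))
    intro m
    obtain ⟨ρn, hρn⟩ := (hMAX p hrp).2.2 m
    obtain ⟨τn, hτn⟩ := (hMIN q hrq).2.2 m
    have hcmp := fg_compare Mmax Mmin f g hf hg hle d hfin δ hfin' δ' _ ρn τn
    rw [hρn, hτn] at hcmp
    linarith
  -- choose the shift
  have hx : ∃ x : ℝ,
      (∀ p : Q1, Sum.inl p ∈ biProd Mmax Mmin d → p ∈ reachSet Mmax (v 0) → lam p ≤ x) ∧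
      (∀ q : Q2, Sum.inr q ∈ biProd Mmax Mmin d → q ∈ reachSet Mmin (v 0) → x ≤ mu q) := by
    set SP : Set Q1 :=
      {p | Sum.inl p ∈ biProd Mmax Mmin d ∧ p ∈ reachSet Mmax (v 0)} with hSP
    set SQ : Set Q2 :=
      {q | Sum.inr q ∈ biProd Mmax Mmin d ∧ q ∈ reachSet Mmin (v 0)} with hSQ
    rcases Set.eq_empty_or_nonempty SP with hE | hNE
    · rcases Set.eq_empty_or_nonempty SQ with hE2 | hNE2
      · refine ⟨0, fun p h1 h2 => ?_, fun q h1 h2 => ?_⟩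
        · have hm : p ∈ SP := ⟨h1, h2⟩
          rw [hE] at hm
          exact absurd hm (Set.notMem_empty p)
        · have hm : q ∈ SQ := ⟨h1, h2⟩
          rw [hE2] at hm
          exact absurd hm (Set.notMem_empty q)
      · refine ⟨sInf (mu '' SQ), fun p h1 h2 => ?_, fun q h1 h2 => ?_⟩
        · have hm : p ∈ SP := ⟨h1, h2⟩
          rw [hE] at hm
          exact absurd hm (Set.notMem_empty p)
        · exact csInf_le ((Set.toFinite _).bddBelow) ⟨q, ⟨h1, h2⟩, rfl⟩
    · refine ⟨sSup (lam '' SP), fun p h1 h2 => le_csSup ((Set.toFinite _).bddAbove)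
        ⟨p, ⟨h1, h2⟩, rfl⟩, fun q h1 h2 => csSup_le (hNE.image lam) ?_⟩
      rintro y ⟨p, hp, rfl⟩
      exact KEY p hp.1 hp.2 q h1 h2
  obtain ⟨x, hx1, hx2⟩ := hx
  refine ⟨tcut, x, hsizecut, hbir, ?_, ?_⟩
  · intro p hp ρ''
    have hrp : p ∈ reachSet Mmax (v 0) := ⟨ρ''⟩
    obtain ⟨h1, ⟨ρ', hC⟩, _⟩ := hMAX p hrp
    refine ⟨ρ', ?_⟩
    have h2 := h1 ρ''
    have h3 := hx1 p hp hrp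
    linarith
  · intro q hq τ''
    have hrq : q ∈ reachSet Mmin (v 0) := ⟨τ''⟩
    obtain ⟨h1, ⟨τ', hC⟩, _⟩ := hMIN q hrq
    refine ⟨τ', ?_⟩
    have h2 := h1 τ''
    have h3 := hx2 q hq hrq
    linarith
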